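/- arXiv:1203.6210 — 3 statements merged into one kernel-verified Lean document; each statement's English description precedes it below -/
import Mathlib

section
/- Let G be a finite group, H ≤ G, and S an NRT of H in G with induced operation ∘. Then (S, ∘) is a group isomorphic to the quotient structure if and only if for all x, y ∈ S, xy(x ∘ y)⁻¹ ∈ Core_G(H); in particular, if H is normal in G, every NRT of H in G is a group under ∘ isomorphic to G/H. -/
/-- A normalized right transversal (NRT) of `H` in `G`. -/
def IsNRT {G : Type*} [Group G] (H : Subgroup G) (S : Set G) : Prop :=
  (1 : G) ∈ S ∧ ∀ g : G, ∃! s, s ∈ S ∧ s * g⁻¹ ∈ H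

lemma mem_normalCore_iff' {G : Type*} [Group G] (H : Subgroup G) (a : G) :
    a ∈ H.normalCore ↔ ∀ b : G, b * a * b⁻¹ ∈ H := Iff.rfl

theorem stmt2 {G : Type*} [Group G] [Fintype G] (H : Subgroup G) (S : Set G)
    (hS : IsNRT H S) (op : G → G → G)
    (hop : ∀ x ∈ S, ∀ y ∈ S, op x y ∈ S ∧ op x y * (x * y)⁻¹ ∈ H) :
    -- `(S, ∘)` is a group (associative with two-sided inverses) precisely when
    -- all the elements `x * y * (x ∘ y)⁻¹` lie in the core of `H`
    (((∀ x ∈ S, ∀ y ∈ S, ∀ z ∈ S, op (op x y) z = op x (op y z)) ∧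
        (∀ x ∈ S, ∃ x' ∈ S, op x x' = 1 ∧ op x' x = 1)) ↔
      (∀ x ∈ S, ∀ y ∈ S, x * y * (op x y)⁻¹ ∈ H.normalCore)) ∧
    -- in particular, if `H` is normal, every NRT is a group under `∘`
    -- isomorphic to `G/H` via the quotient map (which on `S` is a bijection
    -- sending `x ∘ y` to the product `mk x * mk y = mk (x * y)`)
    (H.Normal →
      ((∀ x ∈ S, ∀ y ∈ S, ∀ z ∈ S, op (op x y) z = op x (op y z)) ∧
        (∀ x ∈ S, ∃ x' ∈ S, op x x' = 1 ∧ op x' x = 1) ∧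
        Set.BijOn (QuotientGroup.mk (s := H)) S Set.univ ∧
        (∀ x ∈ S, ∀ y ∈ S,
          (QuotientGroup.mk (op x y) : G ⧸ H) = QuotientGroup.mk (x * y)))) := by
  obtain ⟨h1S, hU⟩ := hS
  have uniq : ∀ (g : G) {s t : G}, s ∈ S → t ∈ S → s * g⁻¹ ∈ H → t * g⁻¹ ∈ H → s = t :=
    fun g _ _ hs ht h1 h2 => (hU g).unique ⟨hs, h1⟩ ⟨ht, h2⟩
  -- `op x 1 = x`
  have hop1 : ∀ x ∈ S, op x 1 = x := by
    intro x hx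
    obtain ⟨hmem, hH⟩ := hop x hx 1 h1S
    refine uniq x hmem hx ?_ ?_
    · simpa using hH
    · simpa using H.one_mem
  -- core condition implies associativity
  have hcore_to_assoc : (∀ x ∈ S, ∀ y ∈ S, x * y * (op x y)⁻¹ ∈ H.normalCore) →
      ∀ x ∈ S, ∀ y ∈ S, ∀ z ∈ S, op (op x y) z = op x (op y z) := by
    intro hc x hx y hy z hz
    obtain ⟨hxyS, hxyH⟩ := hop x hx y hy
    obtain ⟨hyzS, hyzH⟩ := hop y hy z hz
    obtain ⟨hLS, hLH⟩ := hop (op x y) hxyS z hz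
    obtain ⟨hRS, hRH⟩ := hop x hx (op y z) hyzS
    refine uniq (x * y * z) hLS hRS ?_ ?_
    · have e : op (op x y) z * (x * y * z)⁻¹ =
          (op (op x y) z * (op x y * z)⁻¹) * (op x y * (x * y)⁻¹) := by group
      rw [e]; exact H.mul_mem hLH hxyH
    · have hn : op y z * (y * z)⁻¹ ∈ H.normalCore :=
        (H.normalCore).inv_mem_iff.mp (by simpa using hc y hy z hz)
      have hconj : x * (op y z * (y * z)⁻¹) * x⁻¹ ∈ H :=
        H.normalCore_le (Subgroup.Normal.conj_mem inferInstance _ hn x)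
      have e : op x (op y z) * (x * y * z)⁻¹ =
          (op x (op y z) * (x * op y z)⁻¹) * (x * (op y z * (y * z)⁻¹) * x⁻¹) := by group
      rw [e]; exact H.mul_mem hRH hconj
  -- core condition implies two-sided inverses
  have hcore_to_inv : (∀ x ∈ S, ∀ y ∈ S, x * y * (op x y)⁻¹ ∈ H.normalCore) →
      ∀ x ∈ S, ∃ x' ∈ S, op x x' = 1 ∧ op x' x = 1 := by
    intro hc x hx
    obtain ⟨x', ⟨hx'S, hx'H⟩, -⟩ := hU x⁻¹
    have hx'H' : x' * x ∈ H := by simpa using hx'H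
    have hinv : op x' x = 1 := by
      obtain ⟨hmem, hH⟩ := hop x' hx'S x hx
      refine uniq (x' * x) hmem h1S hH ?_
      simpa using H.inv_mem hx'H'
    refine ⟨x', hx'S, ?_, hinv⟩
    -- let e := op x x'; then op e x = x using associativity, hence e = 1
    obtain ⟨heS, heH⟩ := hop x hx x' hx'S
    have hassoc := hcore_to_assoc hc x hx x' hx'S x hx
    rw [hinv, hop1 x hx] at hassoc
    -- hassoc : op (op x x') x = x
    obtain ⟨hmem, hH⟩ := hop (op x x') heS x hx
    rw [hassoc] at hH
    -- hH : x * (op x x' * x)⁻¹ ∈ H, i.e. (op x x')⁻¹ ∈ H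
    have hE : op x x' ∈ H := by
      have : (op x x')⁻¹ ∈ H := by
        have e : (op x x')⁻¹ = x * (op x x' * x)⁻¹ := by group
        rw [e]; exact hH
      simpa using H.inv_mem this
    refine uniq 1 heS h1S (by simpa using hE) (by simpa using H.one_mem)
  -- associativity implies core condition
  have hassoc_to_core : (∀ x ∈ S, ∀ y ∈ S, ∀ z ∈ S, op (op x y) z = op x (op y z)) →
      ∀ x ∈ S, ∀ y ∈ S, x * y * (op x y)⁻¹ ∈ H.normalCore := by
    intro ha x hx y hy
    rw [mem_normalCore_iff']
    intro b
    -- choose the representative s of b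
    obtain ⟨s, ⟨hsS, hsH⟩, -⟩ := hU b
    -- it suffices to show s * (x*y*(op x y)⁻¹) * s⁻¹ ∈ H
    have key : s * (x * y * (op x y)⁻¹) * s⁻¹ ∈ H := by
      obtain ⟨hxyS, hxyH⟩ := hop x hx y hy
      obtain ⟨hsxS, hsxH⟩ := hop s hsS x hx
      obtain ⟨hLS, hLH⟩ := hop (op s x) hsxS y hy
      obtain ⟨hRS, hRH⟩ := hop s hsS (op x y) hxyS
      have heq : op (op s x) y = op s (op x y) := ha s hsS x hx y hy
      have h1 : op (op s x) y * (s * x * y)⁻¹ ∈ H := by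
        have e : op (op s x) y * (s * x * y)⁻¹ =
            (op (op s x) y * (op s x * y)⁻¹) * (op s x * (s * x)⁻¹) := by group
        rw [e]; exact H.mul_mem hLH hsxH
      rw [heq] at h1
      have e : s * (x * y * (op x y)⁻¹) * s⁻¹ =
          ((op s (op x y) * (s * op x y)⁻¹)⁻¹ * (op s (op x y) * (s * x * y)⁻¹))⁻¹ := by
        group
      rw [e]; exact H.inv_mem (H.mul_mem (H.inv_mem hRH) h1)
    -- now b = h⁻¹ * s with h = s * b⁻¹ ∈ H
    have e : b * (x * y * (op x y)⁻¹) * b⁻¹ =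
        (s * b⁻¹)⁻¹ * (s * (x * y * (op x y)⁻¹) * s⁻¹) * (s * b⁻¹) := by group
    rw [e]; exact H.mul_mem (H.mul_mem (H.inv_mem hsH) key) hsH
  have main : (((∀ x ∈ S, ∀ y ∈ S, ∀ z ∈ S, op (op x y) z = op x (op y z)) ∧
        (∀ x ∈ S, ∃ x' ∈ S, op x x' = 1 ∧ op x' x = 1)) ↔
      (∀ x ∈ S, ∀ y ∈ S, x * y * (op x y)⁻¹ ∈ H.normalCore)) := by
    constructor
    · rintro ⟨ha, -⟩; exact hassoc_to_core ha
    · intro hc; exact ⟨hcore_to_assoc hc, hcore_to_inv hc⟩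
  refine ⟨main, ?_⟩
  intro hN
  have hc : ∀ x ∈ S, ∀ y ∈ S, x * y * (op x y)⁻¹ ∈ H.normalCore := by
    intro x hx y hy
    have : H.normalCore = H := @Subgroup.normalCore_eq_self _ _ H hN
    rw [this]
    have := (hop x hx y hy).2
    have e : x * y * (op x y)⁻¹ = (op x y * (x * y)⁻¹)⁻¹ := by group
    rw [e]; exact H.inv_mem this
  refine ⟨hcore_to_assoc hc, hcore_to_inv hc, ⟨?_, ?_, ?_⟩, ?_⟩
  · exact fun x _ => Set.mem_univ _
  · intro x hx y hy hxy
    rw [QuotientGroup.eq] at hxy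
    -- hxy : x⁻¹ * y ∈ H
    have h2 : y * x⁻¹ ∈ H := by
      have := hN.conj_mem _ hxy x
      simpa [mul_assoc] using this
    exact (uniq x hy hx h2 (by simpa using H.one_mem)).symm ▸ rfl
  · intro q _
    obtain ⟨g, rfl⟩ := QuotientGroup.mk_surjective q
    obtain ⟨s, ⟨hsS, hsH⟩, -⟩ := hU g
    refine ⟨s, hsS, ?_⟩
    rw [QuotientGroup.eq]
    -- need s⁻¹ * g ∈ H
    have := hN.conj_mem _ hsH s⁻¹
    simpa [mul_assoc] using H.inv_mem this
  · intro x hx y hy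
    rw [QuotientGroup.eq]
    have h := (hop x hx y hy).2
    have := hN.conj_mem _ h (op x y)⁻¹
    have e : (op x y)⁻¹ * (x * y) = ((op x y)⁻¹ * (op x y * (x * y)⁻¹) * (op x y)⁻¹⁻¹)⁻¹ := by
      group
    rw [e]; exact H.inv_mem this
end

section
/- Every abelian subgroup of the symmetric group Sym(6) has order at most 9. -/
open MulAction

private def fmax : ℕ → ℕ
  | 0 => 1 | 1 => 1 | 2 => 2 | 3 => 3 | 4 => 4 | 5 => 6 | _ => 9

private lemma key : ∀ (n : ℕ), n ≤ 6 → ∀ (l : List ℕ), (∀ x ∈ l, 1 ≤ x) →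
    l.sum ≤ n → l.prod ≤ fmax n := by
  intro n
  induction n using Nat.strong_induction_on with
  | _ n ih =>
    intro hn l
    match l with
    | [] =>
      intro _ _
      simp only [List.prod_nil]
      interval_cases n <;> simp [fmax]
    | a :: l =>
      intro h1 hs
      simp only [List.sum_cons, List.prod_cons] at *
      have ha : 1 ≤ a := h1 a (by simp)
      have hsl : l.sum ≤ n - a := by omega
      have han : a ≤ n := by omega
      have hl : l.prod ≤ fmax (n - a) :=
        ih (n - a) (by omega) (by omega) l (fun x hx => h1 x (by simp [hx])) hsl
      calc a * l.prod ≤ a * fmax (n - a) := Nat.mul_le_mul_left a hl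
        _ ≤ fmax n := by interval_cases n <;> interval_cases a <;> simp [fmax]

theorem stmt6 (H : Subgroup (Equiv.Perm (Fin 6)))
    (hab : ∀ a ∈ H, ∀ b ∈ H, a * b = b * a) :
    Nat.card H ≤ 9 := by
  classical
  set Ω := orbitRel.Quotient H (Fin 6) with hΩ
  have : Fintype Ω := Fintype.ofFinite _
  -- the injection
  have hinj : Function.Injective
      (fun (h : H) (ω : Ω) => (⟨h • ω.out, mem_orbit _ _⟩ : orbit H ω.out)) := by
    intro h h' he
    have he' : ∀ ω : Ω, h • ω.out = h' • ω.out := by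
      intro ω
      have := congrFun he ω
      exact Subtype.ext_iff.mp this
    have keyp : ∀ i : Fin 6, (h : Equiv.Perm (Fin 6)) i = (h' : Equiv.Perm (Fin 6)) i := by
      intro i
      set ω : Ω := Quotient.mk'' i with hω
      have hmem : i ∈ orbit H ω.out := by
        have : (Quotient.mk'' ω.out : Ω) = Quotient.mk'' i := by
          rw [hω]; exact Quotient.out_eq' _
        exact (Quotient.eq''.mp this.symm)
      obtain ⟨g, hg'⟩ := hmem
      have hg : g • ω.out = i := hg'
      have hcomm : h * g = g * h := Subtype.ext (hab h h.2 g g.2)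
      have hcomm' : h' * g = g * h' := Subtype.ext (hab h' h'.2 g g.2)
      calc (h : Equiv.Perm (Fin 6)) i = h • i := rfl
        _ = h • g • ω.out := by rw [hg]
        _ = (h * g) • ω.out := by rw [mul_smul]
        _ = (g * h) • ω.out := by rw [hcomm]
        _ = g • (h • ω.out) := by rw [mul_smul]
        _ = g • (h' • ω.out) := by rw [he' ω]
        _ = (g * h') • ω.out := by rw [mul_smul]
        _ = (h' * g) • ω.out := by rw [hcomm']
        _ = h' • g • ω.out := by rw [mul_smul]
        _ = h' • i := by rw [hg]
        _ = (h' : Equiv.Perm (Fin 6)) i := rfl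
    exact Subtype.ext (Equiv.ext keyp)
  have hcard : Nat.card H ≤ Nat.card (∀ ω : Ω, orbit H ω.out) :=
    Nat.card_le_card_of_injective _ hinj
  rw [Nat.card_pi] at hcard
  -- sum of orbit sizes is 6
  have : ∀ ω : Ω, Fintype (orbit H ω.out) := fun ω => Fintype.ofFinite _
  have hsum : ∑ ω : Ω, Nat.card (orbit H ω.out) = 6 := by
    have h6 := Fintype.card_congr (selfEquivSigmaOrbits H (Fin 6))
    rw [Fintype.card_sigma] at h6
    simp only [Nat.card_eq_fintype_card]
    simpa using h6.symm
  -- each orbit is nonempty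
  have hpos : ∀ ω : Ω, 1 ≤ Nat.card (orbit H ω.out) := by
    intro ω
    have : Nonempty (orbit H ω.out) := ⟨⟨ω.out, mem_orbit_self _⟩⟩
    exact Nat.one_le_iff_ne_zero.mpr (Nat.card_ne_zero.mpr ⟨this, Set.toFinite _⟩)
  -- conclude via the combinatorial lemma
  have hprod : ∏ ω : Ω, Nat.card (orbit H ω.out) ≤ 9 := by
    have hlist := key 6 le_rfl
      ((Finset.univ : Finset Ω).toList.map (fun ω => Nat.card (orbit H ω.out)))
      (by
        intro x hx
        simp only [List.mem_map] at hx
        obtain ⟨ω, _, rfl⟩ := hx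
        exact hpos ω)
      (by rw [Finset.sum_map_toList]; exact hsum.le)
    rwa [Finset.prod_map_toList] at hlist
  exact hcard.trans hprod
end

section
/- Let G be a finite group, H ≤ G with Core_G(H) = {1}, H abelian, H not normal in G, and N ⊴ G with H ≤ N and [N : H] = 2 and [G : N] = 2. Then G ≅ D8 and |H| = 2. -/
private lemma aux_normal_of_index_two {G : Type*} [Group G] (K : Subgroup G)
    (h : K.index = 2) : K.Normal := by
  constructor
  intro n hn g
  rw [Subgroup.mul_mem_iff_of_index_two h, Subgroup.mul_mem_iff_of_index_two h,
    K.inv_mem_iff]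
  tauto

private lemma aux_zpow4 {G : Type*} [Group G] {rr : G} (h4 : orderOf rr = 4) :
    rr ^ (4 : ℤ) = 1 := by
  have : rr ^ (4 : ℕ) = 1 := by rw [← h4]; exact pow_orderOf_eq_one rr
  exact_mod_cast (zpow_natCast rr 4).trans this

private lemma aux_order2_in_pow4 {G : Type*} [Group G] {rr h : G} (h4 : orderOf rr = 4)
    (hh : h ∈ Subgroup.zpowers rr) (hne : h ≠ 1) (hsq : h * h = 1) : h = rr ^ (2 : ℤ) := by
  obtain ⟨j, rfl⟩ := Subgroup.mem_zpowers_iff.mp hh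
  have h2j : rr ^ (2 * j) = 1 := by rw [two_mul, zpow_add]; exact hsq
  have hdvd : (4 : ℤ) ∣ 2 * j := by
    have hd := orderOf_dvd_iff_zpow_eq_one.mpr h2j
    rw [h4] at hd
    exact_mod_cast hd
  obtain ⟨m, rfl⟩ : ∃ m, j = 2 * m := ⟨j / 2, by omega⟩
  rcases Int.even_or_odd m with ⟨u, rfl⟩ | ⟨u, rfl⟩
  · exfalso
    apply hne
    have : (2 : ℤ) * (u + u) = 4 * u := by ring
    rw [this, zpow_mul, aux_zpow4 h4, one_zpow]
  · have : (2 : ℤ) * (2 * u + 1) = 4 * u + 2 := by ring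
    rw [this, zpow_add, zpow_mul, aux_zpow4 h4, one_zpow, one_mul]

private lemma aux_order4_in_pow4 {G : Type*} [Group G] {rr y : G} (h4 : orderOf rr = 4)
    (hy : y ∈ Subgroup.zpowers rr) (hyo : orderOf y = 4) : y = rr ∨ y = rr⁻¹ := by
  obtain ⟨j, rfl⟩ := Subgroup.mem_zpowers_iff.mp hy
  rcases Int.even_or_odd j with ⟨m, rfl⟩ | ⟨m, rfl⟩
  · exfalso
    have hsq : (rr ^ (m + m)) ^ (2 : ℕ) = 1 := by
      rw [← zpow_natCast, ← zpow_mul]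
      have : (m + m) * ((2 : ℕ) : ℤ) = 4 * m := by push_cast; ring
      rw [this, zpow_mul, aux_zpow4 h4, one_zpow]
    have := orderOf_dvd_iff_pow_eq_one.mpr hsq
    rw [hyo] at this
    omega
  · rcases Int.even_or_odd m with ⟨u, rfl⟩ | ⟨u, rfl⟩
    · left
      have : 2 * (u + u) + 1 = 4 * u + 1 := by ring
      rw [this, zpow_add, zpow_mul, aux_zpow4 h4, one_zpow, one_mul, zpow_one]
    · right
      have : 2 * (2 * u + 1) + 1 = 4 * (u + 1) + (-1) := by ring
      rw [this, zpow_add, zpow_mul, aux_zpow4 h4, one_zpow, one_mul, zpow_neg, zpow_one]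

private lemma aux_conj_sq {G : Type*} [Group G] {rr c : G} (h4 : orderOf rr = 4)
    (hc : c ∈ Subgroup.zpowers rr) (hco : orderOf c = 4) : c ^ (2 : ℤ) = rr ^ (2 : ℤ) := by
  rcases aux_order4_in_pow4 h4 hc hco with rfl | rfl
  · rfl
  · have h22 : rr ^ (2 : ℤ) * rr ^ (2 : ℤ) = 1 := by
      rw [← zpow_add]
      norm_num
      exact_mod_cast aux_zpow4 h4
    calc (rr⁻¹) ^ (2 : ℤ) = (rr ^ (2 : ℤ))⁻¹ := by rw [inv_zpow]
      _ = rr ^ (2 : ℤ) := inv_eq_of_mul_eq_one_right h22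

theorem stmt17 {G : Type*} [Group G] [Fintype G]
    (H N : Subgroup G) [N.Normal]
    (hcore : H.normalCore = ⊥)
    (hab : ∀ a ∈ H, ∀ b ∈ H, a * b = b * a)
    (hnn : ¬ H.Normal)
    (hHN : H ≤ N)
    (hNH : H.relIndex N = 2)
    (hGN : N.index = 2) :
    Nonempty (G ≃* DihedralGroup 4) ∧ Nat.card H = 2 := by
  classical
  -- index of H is 4
  have hHindex : H.index = 4 := by
    have h := Subgroup.relIndex_mul_index hHN
    rw [hNH, hGN] at h
    omega
  -- H is normal in N
  have hrel : (H.subgroupOf N).index = 2 := hNH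
  have hsubnormal : (H.subgroupOf N).Normal := aux_normal_of_index_two _ hrel
  have hHn : ∀ n ∈ N, ∀ x ∈ H, n * x * n⁻¹ ∈ H := by
    intro n hn x hx
    have h := hsubnormal.conj_mem ⟨x, hHN hx⟩
      (by simpa [Subgroup.mem_subgroupOf] using hx) ⟨n, hn⟩
    simpa [Subgroup.mem_subgroupOf] using h
  -- a nontrivial element of H
  have hne : H ≠ ⊥ := by
    intro hbot
    exact hnn (hbot ▸ inferInstance)
  obtain ⟨⟨h, hhH⟩, hane⟩ := Subgroup.ne_bot_iff_exists_ne_one.mp hne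
  have hh1 : h ≠ 1 := by simpa using hane
  -- element outside N
  have hNtop : N ≠ ⊤ := by
    intro htop
    rw [htop, Subgroup.index_top] at hGN
    omega
  obtain ⟨t, htN⟩ : ∃ t, t ∉ N := by
    by_contra hcon
    push_neg at hcon
    exact hNtop (Subgroup.eq_top_iff' N |>.mpr hcon)
  -- conjugate subgroup
  set K : Subgroup G := H.map (MulAut.conj t).toMonoidHom with hK
  have hKN : K ≤ N := by
    rintro x ⟨y, hy, rfl⟩
    exact ‹N.Normal›.conj_mem y (hHN hy) t
  have hHK : ∀ x, x ∈ H → x ∈ K → x = 1 := by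
    intro x hx hk
    have hxcore : x ∈ H.normalCore := by
      suffices hst : ∀ b : G, b * x * b⁻¹ ∈ H by exact hst
      intro g
      by_cases hg : g ∈ N
      · exact hHn g hg x hx
      · have hgt : g * t ∈ N := by
          rw [Subgroup.mul_mem_iff_of_index_two hGN]
          tauto
        obtain ⟨y, hy, rfl⟩ := hk
        have h2 := hHn (g * t) hgt y hy
        have heq : g * (MulAut.conj t).toMonoidHom y * g⁻¹ = g * t * y * (g * t)⁻¹ := by
          simp [MulAut.conj_apply]
          group
        rw [heq]
        convert h2 using 2
    rw [hcore] at hxcore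
    exact Subgroup.mem_bot.mp hxcore
  -- cardinalities
  have hKcard : Nat.card K = Nat.card H :=
    (Nat.card_congr (H.equivMapOfInjective (MulAut.conj t).toMonoidHom
      (MulAut.conj t).injective).toEquiv).symm
  have hNcard : Nat.card N = 2 * Nat.card H := by
    have h1 := Subgroup.index_mul_card (H.subgroupOf N)
    rw [hrel] at h1
    have h2 : Nat.card (H.subgroupOf N) = Nat.card H :=
      Nat.card_congr (Subgroup.subgroupOfEquivOfLe hHN).toEquiv
    rw [h2] at h1
    exact h1.symm
  have hinj : Function.Injective
      (fun p : H × K => (⟨p.1 * p.2, mul_mem (hHN p.1.2) (hKN p.2.2)⟩ : N)) := by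
    rintro ⟨⟨a, ha⟩, ⟨b, hb⟩⟩ ⟨⟨c, hc⟩, ⟨d, hd⟩⟩ hpq
    simp only [Subtype.mk_eq_mk] at hpq
    have hca : c⁻¹ * a = d * b⁻¹ := by
      rw [inv_mul_eq_iff_eq_mul, ← mul_assoc, eq_mul_inv_iff_mul_eq]
      exact hpq
    have h1 : c⁻¹ * a ∈ H := mul_mem (inv_mem hc) ha
    have h2 : c⁻¹ * a ∈ K := hca ▸ mul_mem hd (inv_mem hb)
    have h3 := hHK _ h1 h2
    have hac : a = c := by
      have := inv_mul_eq_one.mp h3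
      exact this.symm
    subst hac
    have hbd : b = d := by
      have := mul_left_cancel hpq
      exact this
    subst hbd
    rfl
  have hcardle : Nat.card H * Nat.card H ≤ 2 * Nat.card H := by
    have h1 := Nat.card_le_card_of_injective _ hinj
    rw [Nat.card_prod, hKcard, hNcard] at h1
    exact h1
  have hHpos : 0 < Nat.card H := Nat.card_pos
  have hHnontriv : Nontrivial H := (Subgroup.nontrivial_iff_ne_bot H).mpr hne
  have hHge2 : 2 ≤ Nat.card H := Finite.one_lt_card_iff_nontrivial.mpr hHnontriv
  have hH2 : Nat.card H = 2 := by nlinarith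
  -- card G = 8
  have hG8 : Nat.card G = 8 := by
    have := Subgroup.index_mul_card H
    rw [hHindex, hH2] at this
    omega
  -- h has order 2, and is the unique nontrivial element of H
  have hhh : h * h = 1 := by
    have hdvd := Subgroup.orderOf_dvd_natCard H hhH
    rw [hH2] at hdvd
    have hne1 : orderOf h ≠ 1 := by simpa [orderOf_eq_one_iff] using hh1
    have : orderOf h = 2 := by
      rcases (Nat.dvd_prime Nat.prime_two).mp hdvd with h' | h'
      · exact absurd h' hne1
      · exact h'
    have hp := pow_orderOf_eq_one h
    rw [this, pow_two] at hp
    exact hp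

  -- every element of H is 1 or h
  have hx1h : ∀ x ∈ H, x = 1 ∨ x = h := by
    intro x hx
    by_cases hx1 : x = 1
    · left; exact hx1
    · right
      obtain ⟨y, hy, hyu⟩ := (Nat.card_eq_two_iff' (1 : H)).mp hH2
      have e1 : (⟨x, hx⟩ : H) = y := hyu _ (by simpa using hx1)
      have e2 : (⟨h, hhH⟩ : H) = y := hyu _ (by simpa using hh1)
      exact Subtype.ext_iff.mp (e1.trans e2.symm)
  -- there exists an element of order 4
  by_cases hsq : ∀ g : G, g * g = 1
  · exfalso
    apply hnn
    have hcomm : ∀ a b : G, a * b = b * a := by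
      intro a b
      have ha : a⁻¹ = a := inv_eq_of_mul_eq_one_right (hsq a)
      have hb : b⁻¹ = b := inv_eq_of_mul_eq_one_right (hsq b)
      have hinv : (a * b)⁻¹ = a * b := inv_eq_of_mul_eq_one_right (hsq (a * b))
      rw [mul_inv_rev, ha, hb] at hinv
      exact hinv.symm
    constructor
    intro x hx g
    rw [hcomm g x, mul_assoc, mul_inv_cancel, mul_one]
    exact hx
  push_neg at hsq
  obtain ⟨r0, hr0⟩ := hsq
  obtain ⟨n0, hn0⟩ : ∃ n, orderOf r0 = n := ⟨_, rfl⟩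
  have hr0dvd : n0 ∣ 8 := by
    have := orderOf_dvd_natCard r0
    rwa [hG8, hn0] at this
  have hr0ne1 : n0 ≠ 1 := by
    intro hr
    rw [hr, orderOf_eq_one_iff] at hn0
    rw [hn0] at hr0
    simp at hr0
  have hr0ne2 : n0 ≠ 2 := by
    intro hr
    have hp := pow_orderOf_eq_one r0
    rw [hn0, hr, pow_two] at hp
    exact hr0 hp
  have hle8 : n0 ≤ 8 := Nat.le_of_dvd (by norm_num) hr0dvd
  have hpos0 : 0 < n0 := by
    rw [← hn0]
    exact orderOf_pos r0
  have hcases : n0 = 4 ∨ n0 = 8 := by interval_cases n0 <;> omega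
  rcases hcases with hord4' | hord8'
  swap
  · -- order 8 : G cyclic, contradiction
    exfalso
    apply hnn
    have htop : Subgroup.zpowers r0 = ⊤ := by
      apply Subgroup.eq_top_of_card_eq
      rw [Nat.card_zpowers, hn0, hord8', hG8]
    constructor
    intro x hx g
    have hxz : x ∈ Subgroup.zpowers r0 := htop ▸ Subgroup.mem_top x
    have hgz : g ∈ Subgroup.zpowers r0 := htop ▸ Subgroup.mem_top g
    obtain ⟨k, rfl⟩ := Subgroup.mem_zpowers_iff.mp hgz
    obtain ⟨m, rfl⟩ := Subgroup.mem_zpowers_iff.mp hxz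
    have hcomm : r0 ^ k * r0 ^ m * (r0 ^ k)⁻¹ = r0 ^ m := by
      rw [← zpow_add, ← zpow_neg, ← zpow_add]
      congr 1
      ring
    rw [hcomm]
    exact hx
  · have hord4 : orderOf r0 = 4 := by rw [hn0, hord4']
    set P := Subgroup.zpowers r0 with hPdef
    have hPcard : Nat.card P = 4 := by rw [hPdef, Nat.card_zpowers, hord4]
    have hPindex : P.index = 2 := by
      have := Subgroup.index_mul_card P
      rw [hPcard, hG8] at this
      omega
    have hPnormal : P.Normal := aux_normal_of_index_two _ hPindex
    have hsinv : h⁻¹ = h := inv_eq_of_mul_eq_one_right hhh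
    -- h is not in P
    have hhP : h ∉ P := by
      intro hhP
      apply hnn
      have hh2 : h = r0 ^ (2 : ℤ) := aux_order2_in_pow4 hord4 hhP hh1 hhh
      constructor
      intro x hx g
      rcases hx1h x hx with rfl | hxh
      · simpa using H.one_mem
      · rw [hxh]
        have hcg : g * r0 * g⁻¹ ∈ P := hPnormal.conj_mem r0 (Subgroup.mem_zpowers r0) g
        have hcord : orderOf (g * r0 * g⁻¹) = 4 := by
          have := orderOf_injective (MulAut.conj g).toMonoidHom
            (MulAut.conj g).injective r0
          simpa [MulAut.conj_apply, hord4] using this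
        have hkey : g * h * g⁻¹ = h := by
          rw [hh2]
          have h1 : g * r0 ^ (2 : ℤ) * g⁻¹ = (g * r0 * g⁻¹) ^ (2 : ℤ) := by
            rw [zpow_two, zpow_two]
            simp [mul_assoc]
          rw [h1, aux_conj_sq hord4 hcg hcord]
        rw [hkey]
        exact hhH
    -- coset decomposition
    have hdec : ∀ g : G, g ∈ P ∨ ∃ p ∈ P, g = h * p := by
      intro g
      by_cases hg : g ∈ P
      · left; exact hg
      · right
        refine ⟨h * g, ?_, ?_⟩
        · rw [Subgroup.mul_mem_iff_of_index_two hPindex]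
          tauto
        · rw [← mul_assoc, hhh, one_mul]
    -- conjugation of r0 by h
    have hcg2 : h * r0 * h⁻¹ ∈ P := hPnormal.conj_mem r0 (Subgroup.mem_zpowers r0) h
    have hcord2 : orderOf (h * r0 * h⁻¹) = 4 := by
      have := orderOf_injective (MulAut.conj h).toMonoidHom
        (MulAut.conj h).injective r0
      simpa [MulAut.conj_apply, hord4] using this
    rcases aux_order4_in_pow4 hord4 hcg2 hcord2 with hcr | hcri
    · -- h commutes with r0 : contradiction
      exfalso
      apply hnn
      have hcomm : h * r0 = r0 * h := mul_inv_eq_iff_eq_mul.mp hcr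
      have hC : Commute h r0 := hcomm
      constructor
      intro x hx g
      rcases hx1h x hx with rfl | hxh
      · simpa using H.one_mem
      · rw [hxh]
        rcases hdec g with hg | ⟨p, hp, rfl⟩
        · obtain ⟨k, rfl⟩ := Subgroup.mem_zpowers_iff.mp hg
          rw [(hC.symm.zpow_left k).eq, mul_assoc, mul_inv_cancel, mul_one]
          exact hhH
        · obtain ⟨k, rfl⟩ := Subgroup.mem_zpowers_iff.mp hp
          have hkey : h * r0 ^ k * h * (h * r0 ^ k)⁻¹ = h := by
            calc h * r0 ^ k * h * (h * r0 ^ k)⁻¹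
                = h * (r0 ^ k * h) * (r0 ^ k)⁻¹ * h⁻¹ := by group
              _ = h * (h * r0 ^ k) * (r0 ^ k)⁻¹ * h⁻¹ := by
                  rw [(hC.symm.zpow_left k).eq]
              _ = h := by group
          rw [hkey]
          exact hhH
    · -- the dihedral relation holds : build the isomorphism
      have hrel1 : r0 * h = h * r0⁻¹ := by
        have e1 : h * r0 = r0⁻¹ * h := mul_inv_eq_iff_eq_mul.mp hcri
        have e2 := congrArg (fun z => r0 * z * r0⁻¹) e1
        simpa [mul_assoc] using e2
      have hswap : ∀ n : ℕ, r0 ^ n * h = h * (r0 ^ n)⁻¹ := by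
        intro n
        induction n with
        | zero => simp
        | succ n ih =>
          rw [pow_succ, mul_assoc, hrel1, ← mul_assoc, ih, mul_assoc, ← mul_inv_rev,
            ← pow_succ', ← pow_succ]
      have hval : ∀ i j : ZMod 4, r0 ^ (i + j).val = r0 ^ i.val * r0 ^ j.val := by
        intro i j
        rw [← pow_add, pow_eq_pow_iff_modEq, hord4, ZMod.val_add]
        exact Nat.mod_modEq _ 4
      have hvneg : ∀ i : ZMod 4, r0 ^ (-i).val = (r0 ^ i.val)⁻¹ := by
        intro i
        apply eq_inv_of_mul_eq_one_left
        rw [← hval, neg_add_cancel]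
        simp [ZMod.val_zero]
      have hswap' : ∀ i : ZMod 4, r0 ^ i.val * h = h * r0 ^ (-i).val := by
        intro i
        rw [hvneg]
        exact hswap i.val
      let fmap : DihedralGroup 4 → G := fun x =>
        match x with
        | DihedralGroup.r i => r0 ^ i.val
        | DihedralGroup.sr i => h * r0 ^ i.val
      have hfr : ∀ i : ZMod 4, fmap (DihedralGroup.r i) = r0 ^ i.val := fun i => rfl
      have hfsr : ∀ i : ZMod 4, fmap (DihedralGroup.sr i) = h * r0 ^ i.val := fun i => rfl
      have hfmul : ∀ a b : DihedralGroup 4, fmap (a * b) = fmap a * fmap b := by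
        rintro (i | i) (j | j)
        · rw [DihedralGroup.r_mul_r, hfr, hfr, hfr]
          exact hval i j
        · rw [DihedralGroup.r_mul_sr, hfsr, hfr, hfsr]
          rw [← mul_assoc, hswap', mul_assoc, ← hval, neg_add_eq_sub]
        · rw [DihedralGroup.sr_mul_r, hfsr, hfsr, hfr]
          rw [hval, mul_assoc]
        · rw [DihedralGroup.sr_mul_sr, hfr, hfsr, hfsr]
          rw [← mul_assoc, mul_assoc h, hswap', ← mul_assoc, hhh, one_mul,
            ← hval, neg_add_eq_sub]
      let f : DihedralGroup 4 →* G := MonoidHom.mk' fmap hfmul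
      have hexp : ∀ p ∈ P, ∃ n : ZMod 4, r0 ^ n.val = p := by
        intro p hp
        obtain ⟨n, hn⟩ := (Submonoid.mem_powers_iff p r0).mp (mem_powers_iff_mem_zpowers.mpr hp)
        refine ⟨(n : ZMod 4), ?_⟩
        rw [← hn, pow_eq_pow_iff_modEq, hord4, ZMod.val_natCast]
        exact Nat.mod_modEq n 4
      have hsurj : Function.Surjective f := by
        intro g
        rcases hdec g with hg | ⟨p, hp, rfl⟩
        · obtain ⟨n, hn⟩ := hexp g hg
          exact ⟨DihedralGroup.r n, (hfr n).trans hn⟩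
        · obtain ⟨n, hn⟩ := hexp p hp
          refine ⟨DihedralGroup.sr n, (hfsr n).trans ?_⟩
          rw [hn]
      have hbij : Function.Bijective f := by
        rw [Fintype.bijective_iff_surjective_and_card]
        refine ⟨hsurj, ?_⟩
        rw [DihedralGroup.card, ← Nat.card_eq_fintype_card, hG8]
      exact ⟨⟨(MulEquiv.ofBijective f hbij).symm⟩, hH2⟩
end
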